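/- Let μ = (μ₁,...,μ_r) be a system of measures on ℝ with all moments finite, and suppose the multi-index n is normal for μ, with type II polynomial P_n. For z₀ ∈ ℂ, let (x−z₀)μ denote the system ((x−z₀)μ₁,...,(x−z₀)μ_r), where (x−z₀)μ_j is the measure with ∫ f d((x−z₀)μ_j) = ∫ f(x)(x−z₀) dμ_j(x). Then P_n(z₀) = 0 if and only if the index n is not normal for the system (x−z₀)μ. -/

import Mathlib

open Polynomial MeasureTheory

lemma integrable_polyMul (μ : Measure ℝ) (hmom : ∀ k : ℕ, Integrable (fun x : ℝ => x ^ k) μ)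
    (S : Polynomial ℂ) (k : ℕ) :
    Integrable (fun x : ℝ => S.eval (x : ℂ) * (x : ℂ) ^ k) μ := by
  have h : (fun x : ℝ => S.eval (x : ℂ) * (x : ℂ) ^ k)
      = fun x : ℝ => ∑ i ∈ Finset.range (S.natDegree + 1),
          S.coeff i • ((x ^ (i + k) : ℝ) : ℂ) := by
    funext x
    rw [Polynomial.eval_eq_sum_range, Finset.sum_mul]
    refine Finset.sum_congr rfl fun i _ => ?_
    push_cast
    rw [smul_eq_mul]
    ring
  rw [h]
  exact integrable_finset_sum _ fun i _ => ((hmom (i + k)).ofReal).smul (S.coeff i)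

noncomputable def phi (μ : Measure ℝ) (hmom : ∀ k : ℕ, Integrable (fun x : ℝ => x ^ k) μ)
    (k : ℕ) : Polynomial ℂ →ₗ[ℂ] ℂ where
  toFun S := ∫ x : ℝ, S.eval (x : ℂ) * (x : ℂ) ^ k ∂μ
  map_add' S T := by
    simp only [Polynomial.eval_add, add_mul]
    exact integral_add (integrable_polyMul μ hmom S k) (integrable_polyMul μ hmom T k)
  map_smul' c S := by
    simp only [Polynomial.eval_smul, smul_eq_mul, mul_assoc, RingHom.id_apply]
    rw [MeasureTheory.integral_const_mul]

lemma phi_apply (μ : Measure ℝ) (hmom : ∀ k : ℕ, Integrable (fun x : ℝ => x ^ k) μ)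
    (k : ℕ) (S : Polynomial ℂ) :
    phi μ hmom k S = ∫ x : ℝ, S.eval (x : ℂ) * (x : ℂ) ^ k ∂μ := rfl

noncomputable def polyOfFn (M : ℕ) : (Fin M → ℂ) →ₗ[ℂ] Polynomial ℂ :=
  ∑ i : Fin M, (Polynomial.monomial (i : ℕ)).comp (LinearMap.proj i)

lemma polyOfFn_apply (M : ℕ) (a : Fin M → ℂ) :
    polyOfFn M a = ∑ i : Fin M, Polynomial.monomial (i : ℕ) (a i) := by
  simp [polyOfFn, LinearMap.sum_apply]

lemma polyOfFn_coeff (M : ℕ) (a : Fin M → ℂ) (m : ℕ) :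
    (polyOfFn M a).coeff m = if h : m < M then a ⟨m, h⟩ else 0 := by
  rw [polyOfFn_apply, Polynomial.finset_sum_coeff]
  simp only [Polynomial.coeff_monomial]
  split
  · next h =>
    rw [Finset.sum_eq_single (⟨m, h⟩ : Fin M)]
    · simp
    · intro b _ hb
      simp only [ite_eq_right_iff]
      intro hbm
      exact absurd (Fin.ext hbm) hb
    · simp
  · next h =>
    refine Finset.sum_eq_zero fun b _ => ?_
    simp only [ite_eq_right_iff]
    intro hbm
    exact absurd (hbm ▸ b.isLt) h

lemma polyOfFn_inj (M : ℕ) : Function.Injective (polyOfFn M) := by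
  intro a b hab
  funext i
  have := congrArg (fun p => Polynomial.coeff p (i : ℕ)) hab
  simpa [polyOfFn_coeff, i.isLt] using this

/-- `P` is a type II multiple orthogonal polynomial at multi-index `n` for the system of
(possibly complex) measures `w j dμ j`. -/
def IsTypeII {r : ℕ} (μ : Fin r → Measure ℝ) (w : Fin r → ℝ → ℂ) (n : Fin r → ℕ)
    (P : Polynomial ℂ) : Prop :=
  P.Monic ∧ P.natDegree = ∑ j, n j ∧
    ∀ j, ∀ k < n j, ∫ x : ℝ, P.eval (x : ℂ) * (x : ℂ) ^ k * w j x ∂(μ j) = 0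

/-- The index `n` is normal: the type II polynomial exists and is unique. -/
def NormalII {r : ℕ} (μ : Fin r → Measure ℝ) (w : Fin r → ℝ → ℂ) (n : Fin r → ℕ) : Prop :=
  ∃! P : Polynomial ℂ, IsTypeII μ w n P

/-- Zero criterion for type II polynomials: if `n` is normal for `μ` with type II polynomial
`P`, then `P(z₀) = 0` iff `n` is not normal for the Christoffel transformed system
`((x-z₀)μ₁, ..., (x-z₀)μ_r)`. -/
theorem stmt5 (r : ℕ) (μ : Fin r → Measure ℝ)
    (hmom : ∀ j, ∀ k : ℕ, Integrable (fun x : ℝ => x ^ k) (μ j))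
    (n : Fin r → ℕ) (P : Polynomial ℂ)
    (hnorm : NormalII μ (fun _ _ => 1) n) (hP : IsTypeII μ (fun _ _ => 1) n P)
    (z₀ : ℂ) :
    P.eval z₀ = 0 ↔ ¬ NormalII μ (fun _ x => (x : ℂ) - z₀) n := by
  classical
  set N := ∑ j, n j with hN
  set Φ : Fin r → ℕ → (Polynomial ℂ →ₗ[ℂ] ℂ) := fun j k => phi (μ j) (hmom j) k with hΦ
  -- weight-1 conditions in terms of Φ
  have hOne : ∀ (D : Polynomial ℂ), IsTypeII μ (fun _ _ => 1) n D
      ↔ (D.Monic ∧ D.natDegree = N ∧ ∀ j, ∀ k < n j, Φ j k D = 0) := by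
    intro D
    unfold IsTypeII
    simp only [mul_one, hΦ, phi_apply, hN]
  -- transformed conditions in terms of Φ
  have hTwo : ∀ (Q : Polynomial ℂ), IsTypeII μ (fun _ x => (x : ℂ) - z₀) n Q
      ↔ (Q.Monic ∧ Q.natDegree = N ∧ ∀ j, ∀ k < n j, Φ j k ((X - C z₀) * Q) = 0) := by
    intro Q
    unfold IsTypeII
    have : ∀ j (k : ℕ),
        (∫ x : ℝ, Q.eval (x : ℂ) * (x : ℂ) ^ k * ((x : ℂ) - z₀) ∂(μ j))
          = Φ j k ((X - C z₀) * Q) := by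
      intro j k
      rw [hΦ, phi_apply]
      congr 1
      funext x
      simp only [Polynomial.eval_mul, Polynomial.eval_sub, Polynomial.eval_X,
        Polynomial.eval_C]
      ring
    constructor
    · rintro ⟨h1, h2, h3⟩
      exact ⟨h1, h2, fun j k hk => (this j k) ▸ h3 j k hk⟩
    · rintro ⟨h1, h2, h3⟩
      exact ⟨h1, h2, fun j k hk => (this j k).symm ▸ h3 j k hk⟩
  have hPm : P.Monic := hP.1
  have hPd : P.natDegree = N := hP.2.1
  have hPcond : ∀ j, ∀ k < n j, Φ j k P = 0 := ((hOne P).1 hP).2.2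
  have hPdeg : P.degree = (N : ℕ) := by
    rw [Polynomial.degree_eq_natDegree hPm.ne_zero, hPd]
  -- uniqueness at n for μ
  obtain ⟨P₀, hP₀, hPuniq⟩ := hnorm
  have huniq : ∀ D : Polynomial ℂ, IsTypeII μ (fun _ _ => 1) n D → D = P := by
    intro D hD
    rw [hPuniq D hD, hPuniq P hP]
  -- the span lemma: solutions of degree ≤ N are multiples of P
  have hspan : ∀ D : Polynomial ℂ, D.natDegree ≤ N →
      (∀ j, ∀ k < n j, Φ j k D = 0) → D = D.coeff N • P := by
    intro D hDd hDc
    set c := D.coeff N with hc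
    set E := D - c • P with hE
    have hEcond : ∀ j, ∀ k < n j, Φ j k E = 0 := by
      intro j k hk
      rw [hE, map_sub, LinearMap.map_smul, hDc j k hk, hPcond j k hk]
      simp
    have hEcoeffN : E.coeff N = 0 := by
      rw [hE]
      simp only [Polynomial.coeff_sub, Polynomial.coeff_smul, smul_eq_mul]
      rw [← hPd, hPm.coeff_natDegree]
      simp [hc, hPd]
    have hEdeg : E.degree < (N : ℕ) := by
      rw [Polynomial.degree_lt_iff_coeff_zero]
      intro m hm
      rcases eq_or_lt_of_le hm with h | h
      · exact_mod_cast h ▸ hEcoeffN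
      · have hmN : N < m := by exact_mod_cast h
        rw [hE]
        simp only [Polynomial.coeff_sub, Polynomial.coeff_smul, smul_eq_mul]
        rw [Polynomial.coeff_eq_zero_of_natDegree_lt (lt_of_le_of_lt hDd hmN),
          Polynomial.coeff_eq_zero_of_natDegree_lt (by omega : P.natDegree < m)]
        ring
    have hPE : IsTypeII μ (fun _ _ => 1) n (P + E) := by
      rw [hOne]
      refine ⟨hPm.add_of_left (hPdeg ▸ hEdeg), ?_, ?_⟩
      · rw [Polynomial.natDegree_eq_of_degree_eq
          (Polynomial.degree_add_eq_left_of_degree_lt (hPdeg ▸ hEdeg)), hPd]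
      · intro j k hk
        rw [map_add, hPcond j k hk, hEcond j k hk, add_zero]
    have := huniq (P + E) hPE
    have hE0 : E = 0 := by
      have : P + E = P + 0 := by rw [add_zero]; exact this
      exact add_left_cancel this
    rw [hE] at hE0
    rw [sub_eq_zero] at hE0
    exact hE0
  constructor
  · -- P(z₀) = 0 → not normal
    intro hz hN'
    obtain ⟨Q, hQ, hQuniq⟩ := hN'
    obtain ⟨R, hR⟩ := Polynomial.dvd_iff_isRoot.2 hz
    have hRm : R.Monic := (monic_X_sub_C z₀).of_mul_monic_left (hR ▸ hPm)
    have hRd : R.natDegree = N - 1 ∧ 1 ≤ N := by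
      have := hPd
      rw [hR, Polynomial.natDegree_mul (X_sub_C_ne_zero z₀) hRm.ne_zero,
        Polynomial.natDegree_X_sub_C] at this
      omega
    have hQ' := (hTwo Q).1 hQ
    have hQm : Q.Monic := hQ'.1
    have hQd : Q.natDegree = N := hQ'.2.1
    have hdegRQ : R.degree < Q.degree := by
      apply Polynomial.degree_lt_degree
      omega
    have hQR : IsTypeII μ (fun _ x => (x : ℂ) - z₀) n (Q + R) := by
      rw [hTwo]
      refine ⟨hQm.add_of_left hdegRQ, ?_, ?_⟩
      · rw [Polynomial.natDegree_eq_of_degree_eq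
          (Polynomial.degree_add_eq_left_of_degree_lt hdegRQ), hQd]
      · intro j k hk
        rw [mul_add, map_add, hQ'.2.2 j k hk, ← hR, hPcond j k hk, add_zero]
    have := hQuniq (Q + R) hQR
    have hR0 : R = 0 := by
      have h0 : Q + R = Q + 0 := by rw [add_zero]; exact this.trans (hQuniq Q hQ).symm
      exact add_left_cancel h0
    exact hRm.ne_zero hR0
  · -- not normal → P(z₀) = 0, by contraposition
    intro hN'
    by_contra hz
    apply hN'
    -- linear algebra: find an element of degree N+1 in the kernel
    set T := (∀ j : Fin r, Fin (n j) → ℂ)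
    set Lbig : Polynomial ℂ →ₗ[ℂ] T :=
      LinearMap.pi (fun j => LinearMap.pi (fun k : Fin (n j) => Φ j (k : ℕ))) with hLbig
    have hLbig_zero : ∀ p : Polynomial ℂ, Lbig p = 0 ↔ ∀ j, ∀ k < n j, Φ j k p = 0 := by
      intro p
      constructor
      · intro h j k hk
        have := congrFun (congrFun h j) ⟨k, hk⟩
        exact this
      · intro h
        funext j k
        exact h j (k : ℕ) k.isLt
    set L' : (Fin (N + 2) → ℂ) →ₗ[ℂ] T := Lbig.comp (polyOfFn (N + 2)) with hL'
    set K := LinearMap.ker L' with hK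
    have hfinK : 2 ≤ Module.finrank ℂ K := by
      have h1 := LinearMap.finrank_range_add_finrank_ker L'
      rw [← hK] at h1
      have h2 : Module.finrank ℂ (Fin (N + 2) → ℂ) = N + 2 := Module.finrank_fin_fun ℂ
      have h3 : Module.finrank ℂ (LinearMap.range L') ≤ N := by
        refine le_trans (Submodule.finrank_le _) ?_
        rw [show Module.finrank ℂ T = N from ?_]
        rw [Module.finrank_pi_fintype, hN]
        exact Finset.sum_congr rfl fun j _ => Module.finrank_fin_fun ℂ
      omega
    -- there is a kernel element with nonzero top coefficient
    have hex : ∃ a : Fin (N + 2) → ℂ, a ∈ K ∧ a ⟨N + 1, by omega⟩ ≠ 0 := by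
      by_contra hcon
      push_neg at hcon
      have hall : ∀ a ∈ K, polyOfFn (N + 2) a = a ⟨N, by omega⟩ • P := by
        intro a ha
        have htop : a ⟨N + 1, by omega⟩ = 0 := hcon a ha
        have hd : (polyOfFn (N + 2) a).natDegree ≤ N := by
          refine Polynomial.natDegree_le_iff_coeff_eq_zero.2 fun m hm => ?_
          rw [polyOfFn_coeff]
          split
          · next h =>
            have : m = N + 1 := by omega
            subst this
            exact htop
          · rfl
        have hc : ∀ j, ∀ k < n j, Φ j k (polyOfFn (N + 2) a) = 0 := by
          have := (hLbig_zero (polyOfFn (N + 2) a)).1 ha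
          exact this
        have := hspan _ hd hc
        rw [this, polyOfFn_coeff]
        rw [dif_pos (by omega : N < N + 2)]
      -- the projection to the N-th coordinate is injective on K
      set ψ : K →ₗ[ℂ] ℂ := (LinearMap.proj (⟨N, by omega⟩ : Fin (N + 2))).comp K.subtype
        with hψ
      have hinj : Function.Injective ψ := by
        rw [← LinearMap.ker_eq_bot]
        rw [Submodule.eq_bot_iff]
        rintro ⟨a, ha⟩ hmem
        have h0 : a ⟨N, by omega⟩ = 0 := hmem
        have hz0 : polyOfFn (N + 2) a = polyOfFn (N + 2) (0 : Fin (N + 2) → ℂ) := by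
          rw [hall a ha, h0, zero_smul, map_zero]
        exact Subtype.ext (polyOfFn_inj (N + 2) hz0)
      have := LinearMap.finrank_le_finrank_of_injective hinj
      rw [Module.finrank_self] at this
      omega
    obtain ⟨a, haK, hatop⟩ := hex
    set c₁ : ℂ := a ⟨N + 1, by omega⟩ with hc₁
    set S₁ : Polynomial ℂ := c₁⁻¹ • polyOfFn (N + 2) a with hS₁
    have hS₁coeff : S₁.coeff (N + 1) = 1 := by
      rw [hS₁, Polynomial.coeff_smul, polyOfFn_coeff, dif_pos (by omega : N + 1 < N + 2)]
      simp only [smul_eq_mul]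
      exact inv_mul_cancel₀ hatop
    have hS₁d : S₁.natDegree = N + 1 := by
      have hle : S₁.natDegree ≤ N + 1 := by
        refine le_trans (Polynomial.natDegree_smul_le _ _) ?_
        refine Polynomial.natDegree_le_iff_coeff_eq_zero.2 fun m hm => ?_
        rw [polyOfFn_coeff, dif_neg (by omega)]
      have hge : N + 1 ≤ S₁.natDegree :=
        Polynomial.le_natDegree_of_ne_zero (by rw [hS₁coeff]; exact one_ne_zero)
      omega
    have hS₁m : S₁.Monic := by
      rw [Polynomial.Monic, Polynomial.leadingCoeff, hS₁d, hS₁coeff]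
    have hS₁cond : ∀ j, ∀ k < n j, Φ j k S₁ = 0 := by
      intro j k hk
      rw [hS₁, LinearMap.map_smul]
      have := (hLbig_zero (polyOfFn (N + 2) a)).1 haK j k hk
      rw [this, smul_zero]
    -- adjust to vanish at z₀
    set c₂ : ℂ := S₁.eval z₀ / P.eval z₀ with hc₂
    set S : Polynomial ℂ := S₁ - c₂ • P with hS
    have hdegc₂P : (c₂ • P).degree < S₁.degree := by
      refine lt_of_le_of_lt (Polynomial.degree_smul_le _ _) ?_
      rw [hPdeg, Polynomial.degree_eq_natDegree hS₁m.ne_zero, hS₁d]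
      exact_mod_cast Nat.lt_succ_self N
    have hSm : S.Monic := by
      rw [hS, sub_eq_add_neg]
      exact hS₁m.add_of_left (by rw [Polynomial.degree_neg]; exact hdegc₂P)
    have hSd : S.natDegree = N + 1 := by
      rw [hS, sub_eq_add_neg]
      rw [Polynomial.natDegree_eq_of_degree_eq
        (Polynomial.degree_add_eq_left_of_degree_lt
          (by rw [Polynomial.degree_neg]; exact hdegc₂P)), hS₁d]
    have hSz : S.eval z₀ = 0 := by
      rw [hS]
      simp only [Polynomial.eval_sub, Polynomial.eval_smul, smul_eq_mul, hc₂]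
      rw [div_mul_cancel₀ _ hz]
      ring
    have hScond : ∀ j, ∀ k < n j, Φ j k S = 0 := by
      intro j k hk
      rw [hS, map_sub, hS₁cond j k hk, LinearMap.map_smul, hPcond j k hk, smul_zero, sub_zero]
    -- divide by X - z₀
    obtain ⟨Q, hQfac⟩ := Polynomial.dvd_iff_isRoot.2 hSz
    have hQm : Q.Monic := (monic_X_sub_C z₀).of_mul_monic_left (hQfac ▸ hSm)
    have hQd : Q.natDegree = N := by
      have := hSd
      rw [hQfac, Polynomial.natDegree_mul (X_sub_C_ne_zero z₀) hQm.ne_zero,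
        Polynomial.natDegree_X_sub_C] at this
      omega
    have hQtype : IsTypeII μ (fun _ x => (x : ℂ) - z₀) n Q := by
      rw [hTwo]
      exact ⟨hQm, hQd, fun j k hk => by rw [← hQfac]; exact hScond j k hk⟩
    refine ⟨Q, hQtype, ?_⟩
    -- uniqueness
    intro Q' hQ'
    have hQ'' := (hTwo Q').1 hQ'
    set S' : Polynomial ℂ := (X - C z₀) * Q' with hS'
    have hS'm : S'.Monic := (monic_X_sub_C z₀).mul hQ''.1
    have hS'd : S'.natDegree = N + 1 := by
      rw [hS', Polynomial.natDegree_mul (X_sub_C_ne_zero z₀) hQ''.1.ne_zero,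
        Polynomial.natDegree_X_sub_C, hQ''.2.1]
      omega
    set D : Polynomial ℂ := S' - S with hD
    have hDd : D.natDegree ≤ N := by
      refine Polynomial.natDegree_le_iff_coeff_eq_zero.2 fun m hm => ?_
      rw [hD, Polynomial.coeff_sub]
      rcases eq_or_lt_of_le (by omega : N + 1 ≤ m) with h | h
      · rw [← h]
        have e1 : S'.coeff (N + 1) = 1 := by rw [← hS'd]; exact hS'm.coeff_natDegree
        have e2 : S.coeff (N + 1) = 1 := by rw [← hSd]; exact hSm.coeff_natDegree
        rw [e1, e2, sub_self]
      · rw [Polynomial.coeff_eq_zero_of_natDegree_lt (by omega : S'.natDegree < m),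
          Polynomial.coeff_eq_zero_of_natDegree_lt (by omega : S.natDegree < m)]
        ring
    have hDcond : ∀ j, ∀ k < n j, Φ j k D = 0 := by
      intro j k hk
      rw [hD, map_sub, hScond j k hk, hQ''.2.2 j k hk, sub_zero]
    have hDspan := hspan D hDd hDcond
    have hDz : D.eval z₀ = 0 := by
      rw [hD, Polynomial.eval_sub, hSz, hS']
      simp
    have hcoeff0 : D.coeff N = 0 := by
      rw [hDspan] at hDz
      simp only [Polynomial.eval_smul, smul_eq_mul] at hDz
      exact (mul_eq_zero.1 hDz).resolve_right hz
    have hD0 : D = 0 := by rw [hDspan, hcoeff0, zero_smul]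
    have hSS' : S' = S := by rwa [hD, sub_eq_zero] at hD0
    rw [hQfac] at hSS'
    exact mul_left_cancel₀ (X_sub_C_ne_zero z₀) hSS'
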